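/- With M^(k) as defined by the inductive sequence M^(k) = f_k^{a_k} ··· f_1^{a_1}(M) where a_j = ur_j(M^{(j-1)}) + ur_j*(M^{(j-1)}), one has for all 1 ≤ i ≤ k ≤ n: M^(k)_{i,k} ≥ max over 1 ≤ s ≤ n-k of ( Σ_{r=1}^{s} M_{i+1, k+r} − Σ_{r=1}^{s-1} M_{i, k+r} ). -/

import Mathlib

/-- A segment `[a,b]` is a pair of integers. -/
abbrev Seg : Type := ℕ × ℕ

/-- A multisegment is a finite multiset of segments. -/
abbrev MS : Type := Multiset Seg

/-- `M ∈ MS_n`: all segments `[a,b]` satisfy `1 ≤ a ≤ b ≤ n`. -/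
def IsMS (n : ℕ) (M : MS) : Prop := ∀ s ∈ M, 1 ≤ s.1 ∧ s.1 ≤ s.2 ∧ s.2 ≤ n

/-- A bracket: `op` = "(", `cl` = ")". -/
inductive Br | op | cl
deriving DecidableEq

/-- One step of the left-to-right bracket cancellation procedure.  The state
`(cls, ops)` records the tags of the currently uncanceled ")" (in order) and the
currently uncanceled "(" (in order).  A new "(" is appended to `ops`; a new ")"
cancels the last uncanceled "(" if there is one, and otherwise is appended to `cls`. -/
def step {τ : Type} : (List τ × List τ) → (Br × τ) → (List τ × List τ)
  | (cls, ops), (Br.op, s) => (cls, ops ++ [s])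
  | (cls, ops), (Br.cl, s) => if ops.isEmpty then (cls ++ [s], ops) else (cls, ops.dropLast)

/-- Process a tagged bracket string; the result `(cls, ops)` lists the tags of the
uncanceled ")" and the uncanceled "(" (left to right).  The reduced (uncanceled)
string is `")"^cls.length ++ "("^ops.length`. -/
def scan {τ : Type} (l : List (Br × τ)) : List τ × List τ := l.foldl step ([], [])

/-- Number of uncanceled ")" in a tagged bracket string. -/
def urStr {τ : Type} (l : List (Br × τ)) : ℕ := (scan l).1.length

/-- Number of uncanceled "(" in a tagged bracket string. -/
def epsStr {τ : Type} (l : List (Br × τ)) : ℕ := (scan l).2.length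

/-- Tag of the rightmost uncanceled ")", if any. -/
def lastCl {τ : Type} (l : List (Br × τ)) : Option τ := (scan l).1.getLast?

/-- Tag of the leftmost uncanceled "(", if any. -/
def headOp {τ : Type} (l : List (Br × τ)) : Option τ := (scan l).2.head?

/-- The string `S_i(M)`: segments are ordered by increasing height, then by
decreasing lower endpoint; each `[h,i]` contributes "(" and each `[h,i-1]`
contributes ")".  In the block of segments of height `t` the "(" over the
`[i-t+1, i]` segments come immediately before the ")" over the `[i-t, i-1]`
segments, and blocks appear for `t = 1, 2, …`. -/
def Si (M : MS) (i : ℕ) : List (Br × Seg) :=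
  (List.range i).flatMap fun t0 =>
    let t := t0 + 1
    List.replicate (M.count (i - t + 1, i)) (Br.op, ((i - t + 1 : ℕ), i)) ++
    List.replicate (M.count (i - t, i - 1)) (Br.cl, ((i - t : ℕ), i - 1))

/-- The string `S_i^*(M)`: segments ordered by increasing height, then by
increasing lower endpoint; each `[i,j]` contributes "(" and each `[i+1,j]`
contributes ")".  In the block of height `t` the "(" below the `[i, i+t-1]`
segments come immediately before the ")" below the `[i+1, i+t]` segments. -/
def SiStar (n : ℕ) (M : MS) (i : ℕ) : List (Br × Seg) :=
  (List.range n).flatMap fun t0 =>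
    let t := t0 + 1
    List.replicate (M.count (i, i + t - 1)) (Br.op, (i, i + t - 1)) ++
    List.replicate (M.count (i + 1, i + t)) (Br.cl, (i + 1, i + t))

/-- The crystal operator `f_i` on multisegments: it changes the segment `[h,i-1]`
under the rightmost uncanceled ")" of `S_i(M)` into `[h,i]`, or adds a new
segment `[i,i]` if there is no uncanceled ")". -/
def fM (i : ℕ) (M : MS) : MS :=
  match lastCl (Si M i) with
  | some s => M.erase s + {(s.1, i)}
  | none => M + {(i, i)}

/-- The crystal operator `e_i` on multisegments: it changes the segment `[h,i]`
under the leftmost uncanceled "(" of `S_i(M)` into `[h,i-1]` (deleting it when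
`h = i`), or returns `none` (i.e. `0`) if there is no uncanceled "(". -/
def eM (i : ℕ) (M : MS) : Option MS :=
  match headOp (Si M i) with
  | some s => some (if s.1 = i then M.erase s else M.erase s + {(s.1, i - 1)})
  | none => none

/-- The operator `f_i^*`: it changes the segment `[i+1,j]` under the rightmost
uncanceled ")" of `S_i^*(M)` into `[i,j]`, or adds `[i,i]` if there is none. -/
def fMStar (n i : ℕ) (M : MS) : MS :=
  match lastCl (SiStar n M i) with
  | some s => M.erase s + {(i, s.2)}
  | none => M + {(i, i)}

/-- The operator `e_i^*`: it changes the segment `[i,j]` under the leftmost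
uncanceled "(" of `S_i^*(M)` into `[i+1,j]` (deleting it when `j = i`), or
returns `none` if there is no uncanceled "(". -/
def eMStar (n i : ℕ) (M : MS) : Option MS :=
  match headOp (SiStar n M i) with
  | some s => some (if s.2 = i then M.erase s else M.erase s + {(i + 1, s.2)})
  | none => none

/-- The number of boxes labeled `j` in `M`: each segment `[a,b]` contains one
box labeled `j` for each `a ≤ j ≤ b`. -/
def boxes (M : MS) (j : ℕ) : ℕ :=
  (M.filter (fun s => s.1 ≤ j ∧ j ≤ s.2)).card

/-- The pairing `⟨wt(M), α_i^∨⟩ = #(boxes i-1) + #(boxes i+1) - 2 #(boxes i)`. -/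
def wtPair (M : MS) (i : ℕ) : ℤ :=
  (boxes M (i - 1) : ℤ) + (boxes M (i + 1) : ℤ) - 2 * (boxes M i : ℤ)


/-- The sequence `M = M^(0), M^(1), …`, where `M^(k+1)` is obtained from `M^(k)`
by applying `f_{k+1}` exactly `a_{k+1} = ur_{k+1}(M^(k)) + ur_{k+1}^*(M^(k))` times. -/
def Mseq (n : ℕ) (M : MS) : ℕ → MS
  | 0 => M
  | k + 1 =>
      (fM (k + 1))^[urStr (Si (Mseq n M k) (k + 1)) + urStr (SiStar n (Mseq n M k) (k + 1))]
        (Mseq n M k)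

namespace SegScan
open List

lemma step_op (p : List Seg × List Seg) (s : Seg) : step p (Br.op, s) = (p.1, p.2 ++ [s]) := by
  obtain ⟨a,b⟩ := p; rfl

lemma step_cl_nil (cs : List Seg) (s : Seg) : step (cs, []) (Br.cl, s) = (cs ++ [s], []) := rfl

lemma step_cl_cons (cs : List Seg) (o : Seg) (os : List Seg) (s : Seg) :
    step (cs, o :: os) (Br.cl, s) = (cs, (o :: os).dropLast) := rfl

/-- cls passthrough -/
lemma pass (l : List (Br × Seg)) : ∀ (cs os : List Seg),
    List.foldl step (cs, os) l
      = (cs ++ (List.foldl step ([], os) l).1, (List.foldl step ([], os) l).2) := by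
  induction l with
  | nil => intro cs os; simp
  | cons x l ih =>
    intro cs os
    obtain ⟨b, s⟩ := x
    cases b with
    | op =>
      rw [foldl_cons, foldl_cons, step_op, step_op]
      exact ih cs (os ++ [s])
    | cl =>
      cases os with
      | nil =>
        rw [foldl_cons, foldl_cons, step_cl_nil, step_cl_nil]
        simp only [List.nil_append]
        rw [ih (cs ++ [s]) [], ih [s] []]
        simp
      | cons o os' =>
        rw [foldl_cons, foldl_cons, step_cl_cons, step_cl_cons]
        exact ih cs _

lemma cls_prefix (l : List (Br × Seg)) (cs os : List Seg) :
    cs <+: (List.foldl step (cs, os) l).1 := by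
  rw [pass]; exact ⟨_, rfl⟩

/-- adding an extra op at the bottom of the stack -/
lemma ldrop (l : List (Br × Seg)) : ∀ (cs os : List Seg) (z : Seg),
    List.foldl step (cs, z :: os) l =
    (if (List.foldl step (cs, os) l).1.length = cs.length
     then ((List.foldl step (cs, os) l).1, z :: (List.foldl step (cs, os) l).2)
     else ((List.foldl step (cs, os) l).1.eraseIdx cs.length, (List.foldl step (cs, os) l).2)) := by
  induction l with
  | nil => intro cs os z; simp
  | cons x l ih =>
    intro cs os z
    obtain ⟨b, s⟩ := x
    cases b with
    | op =>
      rw [foldl_cons, foldl_cons, step_op, step_op]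
      exact ih cs (os ++ [s]) z
    | cl =>
      cases os with
      | nil =>
        rw [foldl_cons, foldl_cons, step_cl_nil]
        have hst : step (cs, z :: ([] : List Seg)) (Br.cl, s) = (cs, []) := rfl
        rw [hst, pass l (cs ++ [s]) [], pass l cs []]
        have hlen : (cs ++ [s] ++ (List.foldl step (([], []) : List Seg × List Seg) l).1).length ≠ cs.length := by
          simp
        rw [if_neg hlen]
        rw [append_assoc, eraseIdx_append_of_length_le (le_refl _)]
        simp
      | cons o os' =>
        rw [foldl_cons, foldl_cons, step_cl_cons, step_cl_cons,
          show (z :: o :: os').dropLast = z :: (o :: os').dropLast from List.dropLast_cons₂]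
        exact ih cs _ z

/-- provenance of uncanceled cls -/
lemma mem_cls (l : List (Br × Seg)) : ∀ (p : List Seg × List Seg) (x : Seg),
    x ∈ (List.foldl step p l).1 → x ∈ p.1 ∨ (Br.cl, x) ∈ l := by
  induction l with
  | nil => intro p x h; exact Or.inl h
  | cons e l ih =>
    intro p x h
    rw [foldl_cons] at h
    rcases ih _ _ h with h' | h'
    · obtain ⟨b, s⟩ := e
      cases b with
      | op => rw [step_op] at h'; exact Or.inl h'
      | cl =>
        obtain ⟨cs, os⟩ := p
        cases os with
        | nil =>
          rw [step_cl_nil] at h'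
          rcases mem_append.mp h' with h'' | h''
          · exact Or.inl h''
          · simp at h''; subst h''; exact Or.inr (by simp)
        | cons o os' => rw [step_cl_cons] at h'; exact Or.inl h'
    · exact Or.inr (mem_cons_of_mem _ h')

/-- decomposition at the last uncanceled cl -/
lemma decomp (l : List (Br × Seg)) : ∀ (p : List Seg × List Seg) (cs : List Seg) (y : Seg),
    (List.foldl step p l).1 = cs ++ [y] → p.1.length ≤ cs.length →
    ∃ P Q, l = P ++ (Br.cl, y) :: Q ∧ List.foldl step p P = (cs, []) := by
  induction l with
  | nil =>
    intro p cs y h hlen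
    exfalso; rw [foldl_nil] at h
    have := congrArg List.length h
    simp at this; omega
  | cons x l ih =>
    intro p cs y h hlen
    rw [foldl_cons] at h
    by_cases hc : (step p x).1.length ≤ cs.length
    · obtain ⟨P, Q, hPQ, hP⟩ := ih (step p x) cs y h hc
      exact ⟨x :: P, Q, by rw [hPQ]; rfl, by rw [foldl_cons]; exact hP⟩
    · push_neg at hc
      obtain ⟨b, s⟩ := x
      obtain ⟨cs₀, os₀⟩ := p
      have hlen' : cs₀.length ≤ cs.length := hlen
      cases b with
      | op =>
        rw [step_op] at hc
        have : (cs₀, os₀ ++ [s]).1.length = cs₀.length := rfl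
        rw [this] at hc; omega
      | cl =>
        cases os₀ with
        | cons o os' =>
          rw [step_cl_cons] at hc
          have : ((cs₀, (o :: os').dropLast)).1.length = cs₀.length := rfl
          rw [this] at hc; omega
        | nil =>
          rw [step_cl_nil] at hc h
          have hpre : cs₀ ++ [s] <+: cs ++ [y] := h ▸ cls_prefix l _ []
          have hc' : cs.length < cs₀.length + 1 := by simpa using hc
          have heq : cs₀ ++ [s] = cs ++ [y] := hpre.eq_of_length (by simp; omega)
          have h1 : cs₀ = cs := List.append_inj_left' heq (by simp)
          have h2 : s = y := by simpa using List.append_inj_right' heq (by simp)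
          subst h1; subst h2
          exact ⟨[], l, rfl, rfl⟩

/-- the conversion lemma -/
lemma conv (P Q : List (Br × Seg)) (cs : List Seg) (y z : Seg)
    (hP : List.foldl step (([], []) : List Seg × List Seg) P = (cs, []))
    (hl : (scan (P ++ (Br.cl, y) :: Q)).1 = cs ++ [y]) :
    (scan (P ++ (Br.op, z) :: Q)).1 = cs := by
  rw [scan, foldl_append, hP, foldl_cons, step_cl_nil, pass] at hl
  have hl' : cs ++ [y] ++ (List.foldl step (([], []) : List Seg × List Seg) Q).1 = cs ++ [y] := hl
  have hQnil : (List.foldl step (([], []) : List Seg × List Seg) Q).1 = [] := by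
    have := congrArg List.length hl'
    simp at this
    exact this
  rw [scan, foldl_append, hP, foldl_cons]
  have hst : step ((cs, []) : List Seg × List Seg) (Br.op, z) = (cs, z :: []) := rfl
  rw [hst, ldrop Q cs [] z, pass Q cs [], hQnil]
  simp

/-- fold over a replicate of ops -/
lemma fold_rep_op (a : ℕ) (z : Seg) : ∀ (cs os : List Seg),
    List.foldl step (cs, os) (List.replicate a (Br.op, z)) = (cs, os ++ List.replicate a z) := by
  induction a with
  | zero => intro cs os; simp
  | succ a ih =>
    intro cs os
    rw [replicate_succ, foldl_cons, step_op]
    have : ((cs, os).1, (cs, os).2 ++ [z]) = (cs, os ++ [z]) := rfl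
    rw [this, ih]
    simp [replicate_succ, append_assoc]

/-- fold over a replicate of cls, overflow case -/
lemma fold_rep_cl_big (b : ℕ) (y : Seg) : ∀ (cs os : List Seg), os.length ≤ b →
    List.foldl step (cs, os) (List.replicate b (Br.cl, y))
      = (cs ++ List.replicate (b - os.length) y, []) := by
  induction b with
  | zero =>
    intro cs os h
    have : os = [] := length_eq_zero_iff.mp (by omega)
    subst this; simp
  | succ b ih =>
    intro cs os h
    rw [replicate_succ, foldl_cons]
    cases os with
    | nil =>
      rw [step_cl_nil, ih (cs ++ [y]) [] (by simp)]
      simp [replicate_succ, append_assoc]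
    | cons o os' =>
      rw [step_cl_cons]
      have hlen : (o :: os').dropLast.length ≤ b := by
        simp only [List.length_dropLast, List.length_cons] at h ⊢; omega
      rw [ih cs _ hlen]
      have heq : b - (o :: os').dropLast.length = b + 1 - (o :: os').length := by
        simp only [List.length_dropLast, List.length_cons]; omega
      rw [heq]

/-- fold over a replicate of cls, small case -/
lemma fold_rep_cl_small (b : ℕ) (y : Seg) : ∀ (cs os : List Seg), b ≤ os.length →
    List.foldl step (cs, os) (List.replicate b (Br.cl, y))
      = (cs, os.take (os.length - b)) := by
  induction b with
  | zero => intro cs os h; simp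
  | succ b ih =>
    intro cs os h
    rw [replicate_succ, foldl_cons]
    cases os with
    | nil => simp at h
    | cons o os' =>
      rw [step_cl_cons]
      have hlen : b ≤ (o :: os').dropLast.length := by simp at h ⊢; omega
      rw [ih cs _ hlen]
      have h1 : (o :: os').dropLast.take ((o :: os').dropLast.length - b)
          = (o :: os').take ((o :: os').length - (b + 1)) := by
        rw [dropLast_eq_take, take_take]
        have h2 : (List.take ((o :: os').length - 1) (o :: os')).length
            = (o :: os').length - 1 := by simp
        rw [h2]
        congr 1
        rw [min_eq_left (by omega)]
        simp only [List.length_cons]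
        omega
      rw [h1]

lemma urStr_cons_op (z : Seg) (l : List (Br × Seg)) :
    urStr ((Br.op, z) :: l) = urStr l - 1 := by
  have h1 : urStr ((Br.op, z) :: l)
      = (List.foldl step (([], [z]) : List Seg × List Seg) l).1.length := rfl
  have h2 : urStr l = (List.foldl step (([], []) : List Seg × List Seg) l).1.length := rfl
  rw [h1, h2, ldrop l [] [] z]
  set A := (List.foldl step (([], []) : List Seg × List Seg) l) with hA
  by_cases h : A.1.length = ([] : List Seg).length
  · rw [if_pos h]
    show A.1.length = A.1.length - 1
    simp only [List.length_nil] at h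
    omega
  · rw [if_neg h]
    show (A.1.eraseIdx ([] : List Seg).length).length = A.1.length - 1
    rw [List.length_nil, List.length_eraseIdx]
    simp only [List.length_nil] at h
    rw [if_pos (by omega)]

lemma urStr_rep_op (j : ℕ) (z : Seg) (l : List (Br × Seg)) :
    urStr (List.replicate j (Br.op, z) ++ l) = urStr l - j := by
  induction j with
  | zero => simp
  | succ j ih =>
    rw [replicate_succ, cons_append, urStr_cons_op, ih]
    omega

/-- splitting at an element of a replicate run -/
lemma split_run {α : Type} (A B P Q : List α) (x : α) (c : ℕ)
    (hA : x ∉ A) (hB : x ∉ B)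
    (h : A ++ (List.replicate c x ++ B) = P ++ x :: Q) :
    ∃ j1 j2, j1 + j2 + 1 = c ∧ P = A ++ List.replicate j1 x ∧ Q = List.replicate j2 x ++ B := by
  rcases List.append_eq_append_iff.mp h with ⟨a', hP, h2⟩ | ⟨c', hA', h2⟩
  · rcases List.append_eq_append_iff.mp h2 with ⟨d, ha', h3⟩ | ⟨d, hrep, h3⟩
    · exact absurd (h3 ▸ (by simp : x ∈ d ++ x :: Q)) hB
    · have ha'x : a' = List.replicate a'.length x :=
        eq_replicate_of_mem (fun b hb => eq_of_mem_replicate (hrep ▸ mem_append_left d hb))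
      have hdx : ∀ b ∈ d, b = x := fun b hb => eq_of_mem_replicate (hrep ▸ mem_append_right a' hb)
      have hlen : a'.length + d.length = c := by
        have := congrArg List.length hrep; simpa using this.symm
      cases hd : d with
      | nil =>
        exfalso; rw [hd] at h3; simp at h3
        exact hB (h3 ▸ (by simp : x ∈ x :: Q))
      | cons u d' =>
        rw [hd] at h3
        have hu : u = x := hdx u (by rw [hd]; simp)
        subst hu
        rw [cons_append] at h3
        injection h3 with _ h3'
        have hlen2 : a'.length + d'.length + 1 = c := by
          rw [hd] at hlen; simp only [List.length_cons] at hlen; omega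
        refine ⟨a'.length, d'.length, hlen2, ?_, ?_⟩
        · rw [hP]; exact congrArg (fun t => A ++ t) ha'x
        · rw [h3']
          have hd' : d' = List.replicate d'.length u :=
            eq_replicate_of_mem (fun b hb => hdx b (by rw [hd]; exact mem_cons_of_mem _ hb))
          exact congrArg (fun t => t ++ B) hd'
  · cases hc' : c' with
    | cons u c'' =>
      exfalso
      rw [hc', cons_append] at h2
      injection h2 with h21 h22
      exact hA (by rw [hA', hc', h21]; exact mem_append_right _ mem_cons_self)
    | nil =>
      rw [hc'] at h2 hA'
      simp at hA' h2
      cases c with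
      | zero =>
        exfalso; simp at h2
        exact hB (h2 ▸ (by simp : x ∈ x :: Q))
      | succ c0 =>
        rw [replicate_succ, cons_append] at h2
        injection h2 with _ h2'
        exact ⟨0, c0, by omega, by simp [hA'], h2'⟩


-- ===== application layer: block structure =====

def Blk (M : MS) (i : ℕ) (t0 : ℕ) : List (Br × Seg) :=
  List.replicate (M.count (i - t0, i)) (Br.op, ((i - t0 : ℕ), i)) ++
  List.replicate (M.count (i - t0 - 1, i - 1)) (Br.cl, ((i - t0 - 1 : ℕ), i - 1))

lemma Si_eq (M : MS) (i : ℕ) : Si M i = (List.range i).flatMap (Blk M i) := by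
  unfold Si
  apply List.flatMap_congr
  intro t0 ht0
  rw [List.mem_range] at ht0
  show (List.replicate (M.count (i - (t0+1) + 1, i)) (Br.op, ((i - (t0+1) + 1 : ℕ), i)) ++
    List.replicate (M.count (i - (t0+1), i - 1)) (Br.cl, ((i - (t0+1) : ℕ), i - 1))) = _
  unfold Blk
  have h1 : i - (t0 + 1) + 1 = i - t0 := by omega
  have h2 : i - (t0 + 1) = i - t0 - 1 := by omega
  rw [h1, h2]

def BlkS (M : MS) (i : ℕ) (t0 : ℕ) : List (Br × Seg) :=
  List.replicate (M.count (i, i + t0)) (Br.op, (i, i + t0)) ++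
  List.replicate (M.count (i + 1, i + t0 + 1)) (Br.cl, (i + 1, i + t0 + 1))

lemma SiStar_eq (n : ℕ) (M : MS) (i : ℕ) :
    SiStar n M i = (List.range n).flatMap (BlkS M i) := by
  unfold SiStar
  apply List.flatMap_congr
  intro t0 ht0
  show (List.replicate (M.count (i, i + (t0+1) - 1)) (Br.op, (i, i + (t0+1) - 1)) ++
    List.replicate (M.count (i + 1, i + (t0+1))) (Br.cl, (i + 1, i + (t0+1)))) = _
  unfold BlkS
  have h1 : i + (t0 + 1) - 1 = i + t0 := by omega
  have h2 : i + (t0 + 1) = i + t0 + 1 := by omega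
  rw [h1, h2]

lemma Blk_congr {M M' : MS} {i : ℕ} (t0 : ℕ)
    (h1 : M'.count (i - t0, i) = M.count (i - t0, i))
    (h2 : M'.count (i - t0 - 1, i - 1) = M.count (i - t0 - 1, i - 1)) :
    Blk M' i t0 = Blk M i t0 := by unfold Blk; rw [h1, h2]

lemma BlkS_congr {M M' : MS} {i : ℕ} (t0 : ℕ)
    (h1 : M'.count (i, i + t0) = M.count (i, i + t0))
    (h2 : M'.count (i + 1, i + t0 + 1) = M.count (i + 1, i + t0 + 1)) :
    BlkS M' i t0 = BlkS M i t0 := by unfold BlkS; rw [h1, h2]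

lemma Si_split (M : MS) (K τ : ℕ) (hτ : τ + 2 ≤ K) :
    Si M K =
      ((List.range τ).flatMap (Blk M K)
        ++ List.replicate (M.count (K - τ, K)) (Br.op, ((K - τ : ℕ), K)))
      ++ (List.replicate (M.count (K - τ - 1, K - 1)) (Br.cl, ((K - τ - 1 : ℕ), K - 1))
      ++ (List.replicate (M.count (K - τ - 1, K)) (Br.op, ((K - τ - 1 : ℕ), K))
      ++ (List.replicate (M.count (K - τ - 2, K - 1)) (Br.cl, ((K - τ - 2 : ℕ), K - 1))
      ++ ((List.range (K - τ - 2)).map (fun x => τ + 2 + x)).flatMap (Blk M K)))) := by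
  rw [Si_eq]
  have hr : List.range K
      = List.range (τ + 2) ++ (List.range (K - τ - 2)).map (fun x => τ + 2 + x) := by
    rw [← List.range_add]; congr 1; omega
  rw [hr, List.flatMap_append, show τ + 2 = (τ + 1) + 1 from rfl, List.range_succ,
      List.range_succ, List.flatMap_append, List.flatMap_append]
  simp only [List.flatMap_cons, List.flatMap_nil, List.append_nil]
  have hb1 : Blk M K τ
      = List.replicate (M.count (K - τ, K)) (Br.op, ((K - τ : ℕ), K)) ++
        List.replicate (M.count (K - τ - 1, K - 1)) (Br.cl, ((K - τ - 1 : ℕ), K - 1)) := rfl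
  have hb2 : Blk M K (τ + 1)
      = List.replicate (M.count (K - τ - 1, K)) (Br.op, ((K - τ - 1 : ℕ), K)) ++
        List.replicate (M.count (K - τ - 2, K - 1)) (Br.cl, ((K - τ - 2 : ℕ), K - 1)) := by
    unfold Blk
    have e1 : K - (τ + 1) = K - τ - 1 := by omega
    rw [e1, show K - τ - 1 - 1 = K - τ - 2 by omega]
  rw [hb1, hb2]
  simp only [List.append_assoc]

lemma cl_mem_Si {M : MS} {K : ℕ} {y : Seg} (h : (Br.cl, y) ∈ Si M K) :
    ∃ t0, t0 < K ∧ y = ((K - t0 - 1 : ℕ), K - 1) ∧ M.count y ≠ 0 := by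
  rw [Si_eq, List.mem_flatMap] at h
  obtain ⟨t0, ht0, hmem⟩ := h
  rw [List.mem_range] at ht0
  unfold Blk at hmem
  rw [List.mem_append, List.mem_replicate, List.mem_replicate] at hmem
  rcases hmem with ⟨_, h'⟩ | ⟨hc, h'⟩
  · exact Br.noConfusion (congrArg Prod.fst h')
  · injection h' with _ hy
    subst hy
    exact ⟨t0, ht0, rfl, hc⟩

lemma cl_not_mem_blocks {M : MS} {K : ℕ} {y : Seg} (ts : List ℕ)
    (hy : ∀ t0 ∈ ts, ((K - t0 - 1 : ℕ), (K - 1 : ℕ)) ≠ y) :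
    (Br.cl, y) ∉ ts.flatMap (Blk M K) := by
  intro h
  rw [List.mem_flatMap] at h
  obtain ⟨t0, ht0, hmem⟩ := h
  unfold Blk at hmem
  rw [List.mem_append, List.mem_replicate, List.mem_replicate] at hmem
  rcases hmem with ⟨_, h'⟩ | ⟨_, h'⟩
  · exact Br.noConfusion (congrArg Prod.fst h')
  · injection h' with _ hy'
    exact hy t0 ht0 hy'.symm

lemma fM_conv (n K : ℕ) (N : MS) (hKn : K ≤ n) (hN : IsMS n N)
    (y : Seg) (hy : lastCl (Si N K) = some y) :
    y.2 = K - 1 ∧ 1 ≤ y.1 ∧ y.1 + 1 ≤ K ∧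
    fM K N = N.erase y + {(y.1, K)} ∧
    IsMS n (fM K N) ∧
    (∀ x : Seg, x ≠ y → x ≠ (y.1, K) → (fM K N).count x = N.count x) ∧
    (fM K N).count (y.1, K) = N.count (y.1, K) + 1 ∧
    (scan (Si (fM K N) K)).1 = ((scan (Si N K)).1).dropLast ∧
    SiStar n (fM K N) K = SiStar n N K := by
  obtain ⟨cs, hcs⟩ := List.getLast?_eq_some_iff.mp hy
  have hymem : (Br.cl, y) ∈ Si N K := by
    have hm : y ∈ (scan (Si N K)).1 := by rw [hcs]; simp
    rcases mem_cls _ _ _ hm with h | h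
    · simp at h
    · exact h
  obtain ⟨τ, hτK, hyform, hcount⟩ := cl_mem_Si hymem
  have hyN : y ∈ N := Multiset.count_pos.mp (Nat.pos_of_ne_zero hcount)
  have hy1 : 1 ≤ y.1 := (hN y hyN).1
  subst hyform
  have hτ2 : τ + 2 ≤ K := by simp at hy1; omega
  have hy1' : (((K - τ - 1 : ℕ), (K - 1 : ℕ)) : Seg).1 = K - τ - 1 := rfl
  rw [hy1'] at hy1 ⊢
  set y : Seg := ((K - τ - 1 : ℕ), (K - 1 : ℕ)) with hydef
  set z : Seg := ((K - τ - 1 : ℕ), K) with hz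
  have hyz : y ≠ z := by
    intro h
    have := congrArg Prod.snd h
    simp [hydef, hz] at this
    omega
  have hfM : fM K N = N.erase y + {z} := by
    unfold fM; rw [hy]
  set M' : MS := N.erase y + {z} with hM'
  have hcy : M'.count y = N.count y - 1 := by
    rw [hM', Multiset.count_add, Multiset.count_erase_self, Multiset.count_singleton,
      if_neg hyz, add_zero]
  have hcz : M'.count z = N.count z + 1 := by
    rw [hM', Multiset.count_add, Multiset.count_erase_of_ne (Ne.symm hyz),
      Multiset.count_singleton, if_pos rfl]
  have hco : ∀ x : Seg, x ≠ y → x ≠ z → M'.count x = N.count x := by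
    intro x hx1 hx2
    rw [hM', Multiset.count_add, Multiset.count_erase_of_ne hx1,
      Multiset.count_singleton, if_neg hx2, add_zero]
  -- the scan decomposition
  obtain ⟨P, Q, hPQ, hP⟩ := decomp (Si N K) ([], []) cs y hcs (by simp)
  -- block split of Si N K
  set F : List (Br × Seg) := (List.range τ).flatMap (Blk N K) with hF
  set G : List (Br × Seg) :=
    ((List.range (K - τ - 2)).map (fun x => τ + 2 + x)).flatMap (Blk N K) with hG
  set A : List (Br × Seg) :=
    F ++ List.replicate (N.count (K - τ, K)) (Br.op, ((K - τ : ℕ), K)) with hA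
  set B : List (Br × Seg) :=
    List.replicate (N.count z) (Br.op, z)
      ++ (List.replicate (N.count (K - τ - 2, K - 1)) (Br.cl, ((K - τ - 2 : ℕ), K - 1)) ++ G)
    with hB
  have hsplit : Si N K = A ++ (List.replicate (N.count y) (Br.cl, y) ++ B) :=
    Si_split N K τ hτ2
  have hnotA : (Br.cl, y) ∉ A := by
    rw [hA]
    intro hmem
    rcases List.mem_append.mp hmem with hm | hm
    · exact cl_not_mem_blocks (List.range τ)
        (by
          intro t0 ht0
          rw [List.mem_range] at ht0
          rw [hydef]
          intro hcon
          have := congrArg Prod.fst hcon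
          simp at this
          omega) hm
    · have := (List.mem_replicate.mp hm).2
      exact Br.noConfusion (congrArg Prod.fst this)
  have hnotB : (Br.cl, y) ∉ B := by
    rw [hB]
    intro hmem
    rcases List.mem_append.mp hmem with hm | hm
    · have := (List.mem_replicate.mp hm).2
      exact Br.noConfusion (congrArg Prod.fst this)
    rcases List.mem_append.mp hm with hm' | hm'
    · have := (List.mem_replicate.mp hm').2
      have h2 := congrArg Prod.snd this
      have h3 := congrArg Prod.fst (congrArg Prod.snd this)
      simp [hydef] at h3
      omega
    · exact cl_not_mem_blocks _
        (by
          intro t0 ht0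
          rw [List.mem_map] at ht0
          obtain ⟨x, hx, rfl⟩ := ht0
          rw [List.mem_range] at hx
          rw [hydef]
          intro hcon
          have := congrArg Prod.fst hcon
          simp at this
          omega) hm'
  obtain ⟨j1, j2, hj, hPj, hQj⟩ := split_run A B P Q (Br.cl, y) (N.count y) hnotA hnotB
    (by rw [← hsplit, hPQ])
  -- j2 = 0
  have hj2 : j2 = 0 := by
    by_contra hne
    obtain ⟨j2', rfl⟩ : ∃ j2', j2 = j2' + 1 := ⟨j2 - 1, by omega⟩
    have hcls : (scan (Si N K)).1 = cs ++ [y] := hcs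
    rw [hPQ, scan, List.foldl_append, hP, List.foldl_cons, step_cl_nil, hQj,
      List.replicate_succ, List.cons_append, List.foldl_cons, step_cl_nil,
      pass] at hcls
    have := congrArg List.length hcls
    simp at this
  subst hj2
  have hj1 : j1 = N.count y - 1 := by omega
  -- structure of Si M' K
  have hFG1 : (List.range τ).flatMap (Blk M' K) = F := by
    rw [hF]
    apply List.flatMap_congr
    intro t0 ht0
    rw [List.mem_range] at ht0
    apply Blk_congr
    · apply hco
      · rw [hydef]; intro hcon; have := congrArg Prod.snd hcon; simp at this; omega
      · rw [hz]; intro hcon; have := congrArg Prod.fst hcon; simp at this; omega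
    · apply hco
      · rw [hydef]; intro hcon; have := congrArg Prod.fst hcon; simp at this; omega
      · rw [hz]; intro hcon; have := congrArg Prod.snd hcon; simp at this; omega
  have hFG2 : ((List.range (K - τ - 2)).map (fun x => τ + 2 + x)).flatMap (Blk M' K) = G := by
    rw [hG]
    apply List.flatMap_congr
    intro t0 ht0
    rw [List.mem_map] at ht0
    obtain ⟨x, hx, rfl⟩ := ht0
    rw [List.mem_range] at hx
    apply Blk_congr
    · apply hco
      · rw [hydef]; intro hcon; have := congrArg Prod.snd hcon; simp at this; omega
      · rw [hz]; intro hcon; have := congrArg Prod.fst hcon; simp at this; omega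
    · apply hco
      · rw [hydef]; intro hcon; have := congrArg Prod.fst hcon; simp at this; omega
      · rw [hz]; intro hcon; have := congrArg Prod.snd hcon; simp at this; omega
  have hca1 : M'.count (K - τ, K) = N.count (K - τ, K) := by
    apply hco
    · rw [hydef]; intro hcon; have := congrArg Prod.snd hcon; simp at this; omega
    · rw [hz]; intro hcon; have := congrArg Prod.fst hcon; simp at this; omega
  have hcb1 : M'.count (K - τ - 2, K - 1) = N.count (K - τ - 2, K - 1) := by
    apply hco
    · rw [hydef]; intro hcon; have := congrArg Prod.fst hcon; simp at this; omega
    · rw [hz]; intro hcon; have := congrArg Prod.snd hcon; simp at this; omega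
  have hcym : M'.count (K - τ - 1, K - 1) = N.count y - 1 := hcy
  have hczm : M'.count (K - τ - 1, K) = N.count z + 1 := hcz
  have hsplit' : Si M' K = P ++ (Br.op, z) :: Q := by
    rw [Si_split M' K τ hτ2, hFG1, hFG2, hca1, hcb1, hcym, hczm, hPj, hQj, hj1, hB]
    show (F ++ _) ++ _ = ((F ++ _) ++ _) ++ _
    simp only [List.replicate_succ, List.append_assoc, List.cons_append, List.nil_append,
      hydef, hz, List.replicate_zero]
  -- scan of the new string
  have hscan' : (scan (Si M' K)).1 = ((scan (Si N K)).1).dropLast := by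
    rw [hsplit', conv P Q cs y z hP (by rw [← hPQ]; exact hcs), hcs, List.dropLast_concat]
  -- SiStar unchanged
  have hstar : SiStar n M' K = SiStar n N K := by
    rw [SiStar_eq, SiStar_eq]
    apply List.flatMap_congr
    intro t0 ht0
    apply BlkS_congr
    · apply hco
      · rw [hydef]; intro hcon; have := congrArg Prod.fst hcon; simp at this; omega
      · rw [hz]; intro hcon; have := congrArg Prod.fst hcon; simp at this; omega
    · apply hco
      · rw [hydef]; intro hcon; have := congrArg Prod.fst hcon; simp at this; omega
      · rw [hz]; intro hcon; have := congrArg Prod.fst hcon; simp at this; omega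
  have hIs : IsMS n M' := by
    intro x hx
    rw [hM'] at hx
    rcases Multiset.mem_add.mp hx with hm | hm
    · exact hN x (Multiset.mem_of_mem_erase hm)
    · rw [Multiset.mem_singleton] at hm
      subst hm
      refine ⟨hy1, by simp [hz]; omega, by simp [hz]; omega⟩
  rw [hfM]
  exact ⟨rfl, hy1, by omega, rfl, hIs, hco, hcz, hscan', hstar⟩

lemma fM_add (n K : ℕ) (N : MS) (hK1 : 1 ≤ K) (hKn : K ≤ n) (hN : IsMS n N)
    (hy : lastCl (Si N K) = none) :
    fM K N = N + {(K, K)} ∧ IsMS n (fM K N) ∧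
    (∀ x : Seg, x ≠ (K, K) → (fM K N).count x = N.count x) ∧
    Si (fM K N) K = (Br.op, ((K : ℕ), K)) :: Si N K ∧
    SiStar n (fM K N) K = (Br.op, ((K : ℕ), K)) :: SiStar n N K := by
  have hfM : fM K N = N + {((K : ℕ), K)} := by
    unfold fM; rw [hy]
  set z : Seg := ((K : ℕ), K) with hz
  set M' : MS := N + {z} with hM'
  have hcz : M'.count z = N.count z + 1 := by
    rw [hM', Multiset.count_add, Multiset.count_singleton, if_pos rfl]
  have hco : ∀ x : Seg, x ≠ z → M'.count x = N.count x := by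
    intro x hx
    rw [hM', Multiset.count_add, Multiset.count_singleton, if_neg hx, add_zero]
  have hIs : IsMS n M' := by
    intro x hx
    rcases Multiset.mem_add.mp hx with hm | hm
    · exact hN x hm
    · rw [Multiset.mem_singleton] at hm
      subst hm
      exact ⟨hK1, le_refl _, hKn⟩
  have hSi : Si M' K = (Br.op, z) :: Si N K := by
    rw [Si_eq, Si_eq]
    obtain ⟨K', rfl⟩ : ∃ K', K = K' + 1 := ⟨K - 1, by omega⟩
    rw [List.range_succ_eq_map, List.flatMap_cons, List.flatMap_cons]
    have hblk0 : Blk M' (K' + 1) 0 = (Br.op, z) :: Blk N (K' + 1) 0 := by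
      unfold Blk
      have h1 : ((K' + 1 - 0 : ℕ), (K' + 1 : ℕ)) = z := by rw [hz]; simp
      rw [h1]
      rw [hcz, List.replicate_succ]
      have h2 : M'.count (K' + 1 - 0 - 1, K' + 1 - 1) = N.count (K' + 1 - 0 - 1, K' + 1 - 1) := by
        apply hco
        rw [hz]; intro hcon; have := congrArg Prod.fst hcon; simp at this
      rw [h2, List.cons_append]
    have hrest : (List.map Nat.succ (List.range K')).flatMap (Blk M' (K' + 1))
        = (List.map Nat.succ (List.range K')).flatMap (Blk N (K' + 1)) := by
      apply List.flatMap_congr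
      intro t0 ht0
      rw [List.mem_map] at ht0
      obtain ⟨x, hx, rfl⟩ := ht0
      rw [List.mem_range] at hx
      apply Blk_congr
      · apply hco
        rw [hz]; intro hcon; have := congrArg Prod.fst hcon; simp at this; omega
      · apply hco
        rw [hz]; intro hcon; have := congrArg Prod.snd hcon; simp at this
      
    rw [hblk0, hrest, List.cons_append]
  have hStar : SiStar n M' K = (Br.op, z) :: SiStar n N K := by
    rw [SiStar_eq, SiStar_eq]
    obtain ⟨n', rfl⟩ : ∃ n', n = n' + 1 := ⟨n - 1, by omega⟩
    rw [List.range_succ_eq_map, List.flatMap_cons, List.flatMap_cons]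
    have hblk0 : BlkS M' K 0 = (Br.op, z) :: BlkS N K 0 := by
      unfold BlkS
      have h1 : ((K : ℕ), (K + 0 : ℕ)) = z := by rw [hz]; simp
      rw [h1, hcz, List.replicate_succ]
      have h2 : M'.count (K + 1, K + 0 + 1) = N.count (K + 1, K + 0 + 1) := by
        apply hco
        rw [hz]; intro hcon; have := congrArg Prod.fst hcon; simp at this
      rw [h2, List.cons_append]
    have hrest : (List.map Nat.succ (List.range n')).flatMap (BlkS M' K)
        = (List.map Nat.succ (List.range n')).flatMap (BlkS N K) := by
      apply List.flatMap_congr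
      intro t0 ht0
      rw [List.mem_map] at ht0
      obtain ⟨x, hx, rfl⟩ := ht0
      rw [List.mem_range] at hx
      apply BlkS_congr
      · apply hco
        rw [hz]; intro hcon; have := congrArg Prod.snd hcon; simp at this
      · apply hco
        rw [hz]; intro hcon; have := congrArg Prod.fst hcon; simp at this
    rw [hblk0, hrest, List.cons_append]
  rw [hfM]
  exact ⟨rfl, hIs, hco, hSi, hStar⟩

lemma scan_cons_op_nil (z : Seg) (l : List (Br × Seg)) (h : (scan l).1 = []) :
    (scan ((Br.op, z) :: l)).1 = [] := by
  have h1 := urStr_cons_op z l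
  rw [urStr, urStr, h] at h1
  simp at h1
  exact h1

lemma step_iterate (n K : ℕ) (N : MS) (hK1 : 1 ≤ K) (hKn : K ≤ n) (hN : IsMS n N) (j : ℕ) :
    IsMS n ((fM K)^[j] N) ∧
    (∀ x : Seg, x.2 ≠ K - 1 → x.2 ≠ K → ((fM K)^[j] N).count x = N.count x) ∧
    (∀ i : ℕ, i ≠ K →
      ((fM K)^[j] N).count (i, K) + ((scan (Si ((fM K)^[j] N) K)).1).count ((i, K - 1) : Seg)
        = N.count (i, K) + ((scan (Si N K)).1).count ((i, K - 1) : Seg)) ∧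
    ((scan (Si ((fM K)^[j] N) K)).1).length = ((scan (Si N K)).1).length - j ∧
    SiStar n ((fM K)^[j] N) K
      = List.replicate (j - ((scan (Si N K)).1).length) (Br.op, ((K : ℕ), K)) ++ SiStar n N K := by
  induction j with
  | zero => exact ⟨hN, fun x _ _ => rfl, fun i _ => rfl, by simp, by simp⟩
  | succ j ih =>
    obtain ⟨ih1, ih2, ih3, ih4, ih5⟩ := ih
    set L := ((scan (Si N K)).1).length with hL
    set Mm := (fM K)^[j] N with hMm
    rw [Function.iterate_succ_apply']
    cases hlc : lastCl (Si Mm K) with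
    | some y =>
      obtain ⟨hy2, hy1, hyK, _, hIs, hco, hcz, hscan, hstar⟩ := fM_conv n K Mm hKn ih1 y hlc
      obtain ⟨cs', hcs'⟩ := List.getLast?_eq_some_iff.mp hlc
      have hjL : j + 1 ≤ L := by
        have := congrArg List.length hcs'
        simp at this
        omega
      have hdrop : ((scan (Si Mm K)).1).dropLast = cs' := by rw [hcs', List.dropLast_concat]
      refine ⟨hIs, ?_, ?_, ?_, ?_⟩
      · intro x hx1 hx2
        rw [hco x (by intro hcon; rw [hcon] at hx1; exact hx1 hy2)
            (by intro hcon; rw [hcon] at hx2; exact hx2 rfl)]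
        exact ih2 x hx1 hx2
      · intro i hi
        by_cases hiy : i = y.1
        · subst hiy
          have hyeq : y = ((y.1 : ℕ), K - 1) := by
            have : y = (y.1, y.2) := rfl
            rw [this, hy2]
          rw [hcz, hscan, hdrop]
          have hcnt : ((scan (Si Mm K)).1).count ((y.1, K - 1) : Seg)
              = cs'.count ((y.1, K - 1) : Seg) + 1 := by
            rw [hcs', List.count_append, ← hyeq]
            simp
          rw [← ih3 y.1 (by omega), hcnt]
          omega
        · have hne1 : ((i : ℕ), K) ≠ y := by
            intro hcon
            have := congrArg Prod.snd hcon
            rw [hy2] at this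
            simp at this
            omega
          have hne2 : ((i : ℕ), K) ≠ (y.1, K) := by
            intro hcon
            have := congrArg Prod.fst hcon
            simp at this
            exact hiy this
          have hne3 : y ≠ ((i : ℕ), K - 1) := by
            intro hcon
            have := congrArg Prod.fst hcon
            rw [hcon] at hiy
            simp at hiy
          rw [hco _ hne1 hne2, hscan, hdrop]
          have hcnt : ((scan (Si Mm K)).1).count ((i, K - 1) : Seg)
              = cs'.count ((i, K - 1) : Seg) := by
            rw [hcs', List.count_append]
            have : List.count ((i, K - 1) : Seg) [y] = 0 := by
              simp [List.count_cons]
              intro hcon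
              exact hne3 hcon
            rw [this, add_zero]
          rw [← ih3 i hi, hcnt]
      · rw [hscan, List.length_dropLast, ih4]
        omega
      · rw [hstar, ih5]
        congr 1
        have h0 : j - L = 0 := by omega
        have h0' : j + 1 - L = 0 := by omega
        rw [h0, h0']
    | none =>
      obtain ⟨_, hIs, hco, hSi, hStar⟩ := fM_add n K Mm hK1 hKn ih1 hlc
      have hnil : (scan (Si Mm K)).1 = [] := by
        have := List.getLast?_eq_none_iff.mp hlc
        exact this
      have hjL : L ≤ j := by
        rw [hnil] at ih4
        simp at ih4
        omega
      have hnil' : (scan (Si (fM K Mm) K)).1 = [] := by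
        rw [hSi]
        exact scan_cons_op_nil _ _ hnil
      refine ⟨hIs, ?_, ?_, ?_, ?_⟩
      · intro x hx1 hx2
        rw [hco x (by intro hcon; rw [hcon] at hx2; exact hx2 rfl)]
        exact ih2 x hx1 hx2
      · intro i hi
        rw [hco ((i : ℕ), K) (by intro hcon; exact hi (congrArg Prod.fst hcon)), hnil']
        have h' := ih3 i hi
        rw [hnil] at h'
        exact h'
      · rw [hnil', hnil] at *
        simp at ih4 ⊢
        omega
      · rw [hStar, ih5]
        have hsucc : j + 1 - L = (j - L) + 1 := by omega
        rw [hsucc, List.replicate_succ, List.cons_append]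

-- ===== closed form for the initial cls (A3) =====

lemma fold_blocks (M : MS) (K : ℕ) (ts : List ℕ)
    (hts : ∀ t0 ∈ ts, M.count (K - t0, K) ≤ M.count (K - t0 - 1, K - 1)) :
    ∀ cs : List Seg, List.foldl step (cs, []) (ts.flatMap (Blk M K))
      = (cs ++ ts.flatMap (fun t0 =>
          List.replicate (M.count (K - t0 - 1, K - 1) - M.count (K - t0, K))
            (((K - t0 - 1 : ℕ), (K - 1 : ℕ)) : Seg)), []) := by
  induction ts with
  | nil => intro cs; simp
  | cons t0 ts ih =>
    intro cs
    rw [List.flatMap_cons, List.foldl_append]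
    have hblk : List.foldl step (cs, []) (Blk M K t0)
        = (cs ++ List.replicate (M.count (K - t0 - 1, K - 1) - M.count (K - t0, K))
            (((K - t0 - 1 : ℕ), (K - 1 : ℕ)) : Seg), []) := by
      unfold Blk
      rw [List.foldl_append, fold_rep_op, List.nil_append,
        fold_rep_cl_big _ _ _ _ (by rw [List.length_replicate]; exact hts t0 (by simp))]
      rw [List.length_replicate]
    rw [hblk, ih (fun t u => hts t (by simp [u])) _, List.flatMap_cons, List.append_assoc]

lemma cls0_form (n K : ℕ) (N : MS) (hK1 : 1 ≤ K) (hN : IsMS n N)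
    (hs1 : ∀ t0, t0 < K - 1 → N.count (K - t0, K) ≤ N.count (K - t0 - 1, K - 1)) :
    (scan (Si N K)).1 = (List.range (K - 1)).flatMap
      (fun t0 => List.replicate (N.count (K - t0 - 1, K - 1) - N.count (K - t0, K))
        (((K - t0 - 1 : ℕ), (K - 1 : ℕ)) : Seg)) := by
  rw [Si_eq]
  have hr : List.range K = List.range (K - 1) ++ [K - 1] := by
    rw [← List.range_succ]; congr 1; omega
  rw [hr, List.flatMap_append]
  show (List.foldl step ([], []) _).1 = _
  rw [List.foldl_append,
    fold_blocks N K _ (fun t ht => hs1 t (List.mem_range.mp ht)) [], List.nil_append]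
  simp only [List.flatMap_cons, List.flatMap_nil, List.append_nil]
  have hz : N.count (K - (K - 1) - 1, K - 1) = 0 := by
    apply Multiset.count_eq_zero_of_notMem
    intro hmem
    have h1 := (hN _ hmem).1
    simp at h1
    omega
  show (List.foldl step _ (Blk N K (K - 1))).1 = _
  unfold Blk
  rw [hz, List.foldl_append, fold_rep_op]
  simp

lemma cls0_count_ge (n K : ℕ) (N : MS) (hK1 : 1 ≤ K) (hN : IsMS n N)
    (hs1 : ∀ t0, t0 < K - 1 → N.count (K - t0, K) ≤ N.count (K - t0 - 1, K - 1))
    (i : ℕ) (hi1 : 1 ≤ i) (hiK : i ≤ K - 1) :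
    N.count (i, K - 1) ≤ N.count (i + 1, K) + ((scan (Si N K)).1).count ((i, K - 1) : Seg) := by
  rw [cls0_form n K N hK1 hN hs1]
  have hmem : (K - 1 - i) ∈ List.range (K - 1) := List.mem_range.mpr (by omega)
  have hsub : List.Sublist
      (List.replicate (N.count (K - (K - 1 - i) - 1, K - 1) - N.count (K - (K - 1 - i), K))
        (((K - (K - 1 - i) - 1 : ℕ), (K - 1 : ℕ)) : Seg))
      ((List.range (K - 1)).flatMap (fun t0 =>
        List.replicate (N.count (K - t0 - 1, K - 1) - N.count (K - t0, K))
          (((K - t0 - 1 : ℕ), (K - 1 : ℕ)) : Seg))) := by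
    rw [List.flatMap_def]
    exact List.sublist_flatten_of_mem (List.mem_map_of_mem hmem)
  have he1 : K - (K - 1 - i) - 1 = i := by omega
  have he2 : K - (K - 1 - i) = i + 1 := by omega
  rw [he1, he2] at hsub
  have hcount := hsub.count_le ((i, K - 1) : Seg)
  rw [List.count_replicate, if_pos (by simp)] at hcount
  omega

-- ===== the star inequality (A4) =====

lemma star_prefix (M' : MS) (K : ℕ) : ∀ T : ℕ,
    (scan ((List.range T).flatMap (BlkS M' K))).1 = [] →
    (List.foldl step (([], []) : List Seg × List Seg) ((List.range T).flatMap (BlkS M' K))).2.length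
      + ∑ t0 ∈ Finset.range T, M'.count (K + 1, K + t0 + 1)
      = ∑ t0 ∈ Finset.range T, M'.count ((K : ℕ), K + t0) := by
  intro T
  induction T with
  | zero => intro _; simp [scan]
  | succ T ih =>
    intro h
    rw [List.range_succ, List.flatMap_append] at h ⊢
    have hpre : (List.foldl step (([], []) : List Seg × List Seg)
        ((List.range T).flatMap (BlkS M' K))).1 = [] := by
      have hp := cls_prefix ([T].flatMap (BlkS M' K))
        (List.foldl step (([], []) : List Seg × List Seg) ((List.range T).flatMap (BlkS M' K))).1
        (List.foldl step (([], []) : List Seg × List Seg) ((List.range T).flatMap (BlkS M' K))).2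
      rw [scan, List.foldl_append] at h
      rw [h] at hp
      exact List.prefix_nil.mp hp
    have ihh := ih hpre
    set os1 := (List.foldl step (([], []) : List Seg × List Seg)
      ((List.range T).flatMap (BlkS M' K))).2 with hos1
    have hpair : List.foldl step (([], []) : List Seg × List Seg)
        ((List.range T).flatMap (BlkS M' K)) = ([], os1) := Prod.ext hpre rfl
    have hblkT : [T].flatMap (BlkS M' K)
        = List.replicate (M'.count ((K : ℕ), K + T)) (Br.op, ((K : ℕ), K + T))
          ++ List.replicate (M'.count (K + 1, K + T + 1)) (Br.cl, (K + 1, K + T + 1)) := by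
      simp [BlkS]
    rw [scan, List.foldl_append, hpair, hblkT, List.foldl_append, fold_rep_op] at h
    rw [List.foldl_append, hpair, hblkT, List.foldl_append, fold_rep_op]
    rw [Finset.sum_range_succ, Finset.sum_range_succ]
    by_cases hb : M'.count (K + 1, K + T + 1)
        ≤ (os1 ++ List.replicate (M'.count ((K : ℕ), K + T)) ((K : ℕ), K + T)).length
    · rw [fold_rep_cl_small _ _ _ _ hb]
      have hb' : M'.count (K + 1, K + T + 1) ≤ os1.length + M'.count ((K : ℕ), K + T) := by
        simpa using hb
      have hlen2 : ((os1 ++ List.replicate (M'.count ((K : ℕ), K + T)) ((K : ℕ), K + T)).take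
          ((os1 ++ List.replicate (M'.count ((K : ℕ), K + T)) ((K : ℕ), K + T)).length
            - M'.count (K + 1, K + T + 1))).length
          = os1.length + M'.count ((K : ℕ), K + T) - M'.count (K + 1, K + T + 1) := by
        rw [List.length_take]
        simp
      show ((os1 ++ List.replicate (M'.count ((K : ℕ), K + T)) ((K : ℕ), K + T)).take
          ((os1 ++ List.replicate (M'.count ((K : ℕ), K + T)) ((K : ℕ), K + T)).length
            - M'.count (K + 1, K + T + 1))).length + _ = _
      rw [hlen2]
      omega
    · exfalso
      push_neg at hb
      have hb' : os1.length + M'.count ((K : ℕ), K + T) < M'.count (K + 1, K + T + 1) := by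
        simpa using hb
      rw [fold_rep_cl_big _ _ _ _ (by omega)] at h
      have hcon := congrArg List.length h
      simp at hcon
      omega

lemma star_ineq (n K : ℕ) (M' : MS) (h0 : urStr (SiStar n M' K) = 0) (s : ℕ) (hsn : s ≤ n) :
    ∑ t0 ∈ Finset.range s, M'.count (K + 1, K + t0 + 1)
      ≤ ∑ t0 ∈ Finset.range s, M'.count ((K : ℕ), K + t0) := by
  have hr : List.range n = List.range s ++ (List.range (n - s)).map (fun x => s + x) := by
    rw [← List.range_add]; congr 1; omega
  have hnil : (scan ((List.range s).flatMap (BlkS M' K))).1 = [] := by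
    rw [urStr, SiStar_eq, hr, List.flatMap_append] at h0
    have hfull : (scan ((List.range s).flatMap (BlkS M' K)
        ++ ((List.range (n - s)).map (fun x => s + x)).flatMap (BlkS M' K))).1 = [] := by
      rw [List.length_eq_zero_iff] at h0
      exact h0
    rw [scan, List.foldl_append] at hfull
    have hp := cls_prefix (((List.range (n - s)).map (fun x => s + x)).flatMap (BlkS M' K))
      (List.foldl step (([], []) : List Seg × List Seg) ((List.range s).flatMap (BlkS M' K))).1
      (List.foldl step (([], []) : List Seg × List Seg) ((List.range s).flatMap (BlkS M' K))).2
    rw [hfull] at hp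
    exact List.prefix_nil.mp hp
  have := star_prefix M' K s hnil
  omega

-- ===== sum reindexing helpers =====

lemma sum_Icc_one (f : ℕ → ℕ) (s : ℕ) :
    ∑ r ∈ Finset.Icc 1 s, f r = ∑ t ∈ Finset.range s, f (t + 1) := by
  induction s with
  | zero => simp
  | succ s ih =>
    rw [Finset.sum_Icc_succ_top (by omega), ih, Finset.sum_range_succ]

lemma sum_Icc_zero (f : ℕ → ℕ) (s : ℕ) (hs : 1 ≤ s) :
    ∑ r ∈ Finset.Icc 0 (s - 1), f r = ∑ t ∈ Finset.range s, f t := by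
  have h : Finset.Icc 0 (s - 1) = Finset.range s := by
    ext x; simp [Finset.mem_Icc, Finset.mem_range]; omega
  rw [h]

-- ===== sum reindexing helpers for the main proof =====

lemma H1 (f : ℕ → ℕ) (k s : ℕ) :
    ∑ r ∈ Finset.Icc 1 (s + 1), f (k + r)
      = f (k + 1) + ∑ t ∈ Finset.range s, f (k + 1 + t + 1) := by
  simp only [sum_Icc_one, Finset.sum_range_succ']
  have e1 : ∑ t ∈ Finset.range s, f (k + (t + 1 + 1))
      = ∑ t ∈ Finset.range s, f (k + 1 + t + 1) :=
    Finset.sum_congr rfl (fun t _ => by congr 1; omega)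
  rw [e1, show f (k + (0 + 1)) = f (k + 1) from rfl]
  omega

lemma H2 (f : ℕ → ℕ) (k s' : ℕ) :
    ∑ r ∈ Finset.Icc 0 (s' + 1), f (k + r)
      = f k + f (k + 1) + ∑ t ∈ Finset.range s', f (k + 1 + t + 1) := by
  have h0 : ∑ r ∈ Finset.Icc 0 (s' + 1), f (k + r)
      = ∑ t ∈ Finset.range (s' + 2), f (k + t) := by
    have h := sum_Icc_zero (fun r => f (k + r)) (s' + 2) (by omega)
    simpa using h
  rw [h0]
  simp only [Finset.sum_range_succ']
  have e1 : ∑ t ∈ Finset.range s', f (k + (t + 1 + 1))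
      = ∑ t ∈ Finset.range s', f (k + 1 + t + 1) :=
    Finset.sum_congr rfl (fun t _ => by congr 1; omega)
  rw [e1, show f (k + (0 + 1)) = f (k + 1) from rfl, show f (k + 0) = f k from rfl]
  omega

lemma H3 (f : ℕ → ℕ) (k s : ℕ) :
    ∑ r ∈ Finset.Icc 1 s, f (k + 1 + r) = ∑ t ∈ Finset.range s, f (k + 1 + t + 1) := by
  rw [sum_Icc_one (fun r => f (k + 1 + r)) s]
  apply Finset.sum_congr rfl
  intro t _
  rfl

lemma H4 (f : ℕ → ℕ) (k s' : ℕ) :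
    ∑ r ∈ Finset.Icc 0 (s' + 1 - 1), f (k + 1 + r)
      = f (k + 1) + ∑ t ∈ Finset.range s', f (k + 1 + t + 1) := by
  have h := sum_Icc_zero (fun r => f (k + 1 + r)) (s' + 1) (by omega)
  rw [h]
  simp only [Finset.sum_range_succ']
  have e1 : ∑ t ∈ Finset.range s', f (k + 1 + (t + 1))
      = ∑ t ∈ Finset.range s', f (k + 1 + t + 1) :=
    Finset.sum_congr rfl (fun t _ => rfl)
  rw [e1, show f (k + 1 + 0) = f (k + 1) from rfl]
  omega

-- ===== the main invariant =====

lemma main_inv (n : ℕ) (M : MS) (hM : IsMS n M) :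
    ∀ k, k ≤ n →
      IsMS n (Mseq n M k) ∧
      (∀ x : Seg, k < x.2 → (Mseq n M k).count x = M.count x) ∧
      (∀ i, 1 ≤ i → i ≤ k → ∀ s, 1 ≤ s → s ≤ n - k →
        ∑ r ∈ Finset.Icc 1 s, (Mseq n M k).count (i + 1, k + r)
          ≤ ∑ r ∈ Finset.Icc 0 (s - 1), (Mseq n M k).count (i, k + r)) := by
  intro k
  induction k with
  | zero =>
    intro _
    exact ⟨hM, fun x _ => rfl, fun i hi1 hi0 => by omega⟩
  | succ k ih =>
    intro hk1
    obtain ⟨ih1, ih2, ih3⟩ := ih (by omega)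
    set N := Mseq n M k with hNdef
    set a0 := urStr (Si N (k + 1)) + urStr (SiStar n N (k + 1)) with ha0
    have hMeq : Mseq n M (k + 1) = (fM (k + 1))^[a0] N := rfl
    obtain ⟨st1, st2, st3, st4, st5⟩ := step_iterate n (k + 1) N (by omega) hk1 ih1 a0
    set M' := (fM (k + 1))^[a0] N with hM'def
    have hL : urStr (Si N (k + 1)) = ((scan (Si N (k + 1))).1).length := rfl
    have hfin : ((scan (Si M' (k + 1))).1) = [] := by
      apply List.length_eq_zero_iff.mp
      rw [st4]
      omega
    have hcnt : ∀ i : ℕ, i ≠ k + 1 → M'.count (i, k + 1)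
        = N.count (i, k + 1) + ((scan (Si N (k + 1))).1).count ((i, k + 1 - 1) : Seg) := by
      intro i hi
      have h := st3 i hi
      rw [hfin] at h
      simpa using h
    have hstar0 : urStr (SiStar n M' (k + 1)) = 0 := by
      rw [st5, urStr_rep_op]
      omega
    refine ⟨hMeq ▸ st1, ?_, ?_⟩
    · intro x hx
      rw [hMeq, st2 x (by omega) (by omega)]
      exact ih2 x (by omega)
    · intro i hi1 hiK s hs1 hs2
      rw [hMeq]
      by_cases hieq : i = k + 1
      · subst hieq
        have hsi := star_ineq n (k + 1) M' hstar0 s (by omega)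
        have hgl : ∑ r ∈ Finset.Icc 1 s, M'.count (k + 1 + 1, k + 1 + r)
            = ∑ t0 ∈ Finset.range s, M'.count (k + 1 + 1, k + 1 + t0 + 1) := by
          rw [sum_Icc_one (fun r => M'.count (k + 1 + 1, k + 1 + r)) s]
          apply Finset.sum_congr rfl
          intro t _
          rfl
        have hgr : ∑ r ∈ Finset.Icc 0 (s - 1), M'.count (k + 1, k + 1 + r)
            = ∑ t0 ∈ Finset.range s, M'.count ((k + 1 : ℕ), k + 1 + t0) :=
          sum_Icc_zero (fun r => M'.count (k + 1, k + 1 + r)) s hs1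
        rw [hgl, hgr]
        have hsi' : ∑ t0 ∈ Finset.range s, M'.count (k + 1 + 1, k + 1 + t0 + 1)
            = ∑ t0 ∈ Finset.range s, M'.count (k + 1 + 1, k + 1 + t0 + 1) := rfl
        exact hsi
      · -- i ≤ k
        have hik : i ≤ k := by omega
        obtain ⟨s', rfl⟩ : ∃ s', s = s' + 1 := ⟨s - 1, by omega⟩
        -- the s = 1 instances at level k
        have hs1c : ∀ t0, t0 < (k + 1) - 1 →
            N.count (k + 1 - t0, k + 1) ≤ N.count (k + 1 - t0 - 1, k + 1 - 1) := by
          intro t0 ht0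
          have h := ih3 (k - t0) (by omega) (by omega) 1 (le_refl 1) (by omega)
          simp [Finset.Icc_self] at h
          rw [show k + 1 - t0 - 1 = k - t0 by omega, show k + 1 - t0 = k - t0 + 1 by omega,
            show k + 1 - 1 = k by omega]
          exact h
        have hA3 := cls0_count_ge n (k + 1) N (by omega) ih1 hs1c i hi1 (by omega)
        have hc0 := hcnt i hieq
        have hE1 := ih3 i hi1 hik (s' + 1 + 1) (by omega) (by omega)
        rw [show s' + 1 + 1 - 1 = s' + 1 by omega] at hE1
        rw [H1 (fun m => N.count (i + 1, m)) k (s' + 1),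
          H2 (fun m => N.count (i, m)) k s'] at hE1
        have hgl : ∑ r ∈ Finset.Icc 1 (s' + 1), M'.count (i + 1, k + 1 + r)
            = ∑ t ∈ Finset.range (s' + 1), N.count (i + 1, k + 1 + t + 1) := by
          rw [H3 (fun m => M'.count (i + 1, m)) k (s' + 1)]
          apply Finset.sum_congr rfl
          intro t _
          exact st2 _ (by omega) (by omega)
        have hgr : ∑ r ∈ Finset.Icc 0 (s' + 1 - 1), M'.count (i, k + 1 + r)
            = M'.count (i, k + 1) + ∑ t ∈ Finset.range s', N.count (i, k + 1 + t + 1) := by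
          rw [H4 (fun m => M'.count (i, m)) k s']
          congr 1
          apply Finset.sum_congr rfl
          intro t _
          exact st2 _ (by omega) (by omega)
        rw [hgl, hgr]
        have hNk : N.count (i, k) = N.count (i, k + 1 - 1) := by
          rw [show k + 1 - 1 = k by omega]
        rw [hNk] at hE1
        omega

end SegScan

theorem stmt16 (n : ℕ) (M : MS) (hM : IsMS n M) (i k : ℕ)
    (h1 : 1 ≤ i) (hik : i ≤ k) (hkn : k ≤ n) :
    ∀ s : ℕ, 1 ≤ s → s ≤ n - k →
      (∑ r ∈ Finset.Icc 1 s, (M.count (i + 1, k + r) : ℤ))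
        - (∑ r ∈ Finset.Icc 1 (s - 1), (M.count (i, k + r) : ℤ))
      ≤ ((Mseq n M k).count (i, k) : ℤ) := by
  intro s hs1 hs2
  obtain ⟨inv1, inv2, inv3⟩ := SegScan.main_inv n M hM k hkn
  have hineq := inv3 i h1 hik s hs1 hs2
  have hsplit : ∑ r ∈ Finset.Icc 0 (s - 1), (Mseq n M k).count (i, k + r)
      = (Mseq n M k).count (i, k + 0)
        + ∑ r ∈ Finset.Icc 1 (s - 1), (Mseq n M k).count (i, k + r) := by
    have h : Finset.Icc 0 (s - 1) = insert 0 (Finset.Icc 1 (s - 1)) := by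
      ext x; simp [Finset.mem_Icc, Finset.mem_insert]; omega
    rw [h, Finset.sum_insert (by simp)]
  rw [hsplit] at hineq
  have hLM : ∑ r ∈ Finset.Icc 1 s, (Mseq n M k).count (i + 1, k + r)
      = ∑ r ∈ Finset.Icc 1 s, M.count (i + 1, k + r) :=
    Finset.sum_congr rfl (fun r hr => inv2 _
      (by simp [Finset.mem_Icc] at hr; show k < k + r; omega))
  have hRM : ∑ r ∈ Finset.Icc 1 (s - 1), (Mseq n M k).count (i, k + r)
      = ∑ r ∈ Finset.Icc 1 (s - 1), M.count (i, k + r) :=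
    Finset.sum_congr rfl (fun r hr => inv2 _
      (by simp [Finset.mem_Icc] at hr; show k < k + r; omega))
  rw [hLM, hRM] at hineq
  have hk0 : (Mseq n M k).count (i, k + 0) = (Mseq n M k).count (i, k) := by norm_num
  rw [hk0] at hineq
  have hcast : ((∑ r ∈ Finset.Icc 1 s, M.count (i + 1, k + r) : ℕ) : ℤ)
      ≤ ((Mseq n M k).count (i, k) : ℤ)
        + ((∑ r ∈ Finset.Icc 1 (s - 1), M.count (i, k + r) : ℕ) : ℤ) := by
    exact_mod_cast hineq
  push_cast at hcast
  linarith [hcast]
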